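/- Let G be an Abelian group of cardinality γ > ℵ₀, let κ be an uncountable cardinal with κ ≤ γ, and let (G_α)_{α<γ}, (X_α)_{α<γ} be as follows: (G_α)_{α<γ} is a chain of subgroups with G_0 trivial, G_α ⊊ G_β for α < β, continuity at limit ordinals, union G, and [G_{α+1}:G_α] = ℵ₀; each X_α ⊆ G_{α+1} \ G_α satisfies G_{α+1} \ G_α = X_α·G_α with distinct elements of X_α in distinct cosets of G_α. For g ≠ e, let supt(g) = {α_s, …, α_1, α_0} be the set of indices in the unique representation g = x_s⋯x_1x_0 with x_i ∈ X_{α_i} and α_0 > ⋯ > α_s, and supt(e) = ∅. Then for every subset F of G with |F| < κ, there exists a subgroup Y of G with F ⊆ Y, |Y| < κ, and with the property that X_α ⊆ Y whenever g ∈ Y and α ∈ supt(g). -/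

import Mathlib

open Cardinal Pointwise

universe u

section AuxLemmas

variable {G : Type u} [CommGroup G]


variable {G : Type u} [CommGroup G]

/-- Cardinality bound for the subgroup generated by a set. -/
lemma aux_closure_card_le (s : Set G) {c : Cardinal.{u}} (hc : ℵ₀ ≤ c) (hs : #s ≤ c) :
    #(Subgroup.closure s : Set G) ≤ c := by
  have key : ∀ g ∈ Subgroup.closure s,
      ∃ l : List ↥(s ∪ s⁻¹), (l.map Subtype.val).prod = g := by
    intro g hg
    have hg' : g ∈ Submonoid.closure (s ∪ s⁻¹) := by
      rw [← Subgroup.closure_toSubmonoid]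
      exact hg
    obtain ⟨l, hl, hprod⟩ := Submonoid.exists_list_of_mem_closure hg'
    refine ⟨l.attach.map fun x => ⟨x.1, ?_⟩, ?_⟩
    · rcases hl x.1 x.2 with h | h
      · exact Or.inl h
      · exact Or.inr (by simpa [Set.mem_inv] using h)
    · simp only [List.map_map]
      have : (Subtype.val ∘ fun x : {x // x ∈ l} => (⟨x.1, by
          rcases hl x.1 x.2 with h | h
          · exact Or.inl h
          · exact Or.inr (by simpa [Set.mem_inv] using h)⟩ : ↥(s ∪ s⁻¹))) = Subtype.val := rfl
      rw [this, List.attach_map_subtype_val, hprod]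
  choose f hf using key
  have hinj : Function.Injective
      (fun g : (Subgroup.closure s : Set G) => f g.1 g.2) := by
    intro a b hab
    have h2 := congrArg (fun l : List ↥(s ∪ s⁻¹) => (l.map Subtype.val).prod) hab
    simp only [hf] at h2
    exact Subtype.ext h2
  calc #(Subgroup.closure s : Set G) ≤ #(List ↥(s ∪ s⁻¹)) := mk_le_of_injective hinj
    _ ≤ max ℵ₀ #↥(s ∪ s⁻¹) := mk_list_le_max _
    _ ≤ c := by
      apply max_le hc
      calc #↥(s ∪ s⁻¹) ≤ #s + #(s⁻¹ : Set G) := mk_union_le _ _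
        _ ≤ c + c := by
          apply add_le_add hs
          rw [← Set.image_inv_eq_inv]
          exact le_trans mk_image_le hs
        _ = c := add_eq_self hc



variable (Gs : Ordinal.{u} → Subgroup G) (γord : Ordinal.{u}) (X : Ordinal.{u} → Set G)

/-- product of a list with all indices `< β` lies in `Gs β`. -/
lemma aux_prod_mem
    (hmono' : ∀ α β : Ordinal.{u}, α ≤ β → β < γord → Gs α ≤ Gs β)
    (hXsub : ∀ α : Ordinal.{u}, α < γord → X α ⊆ (Gs (α + 1) : Set G) \ (Gs α : Set G))
    {β : Ordinal.{u}} (hβ : β < γord) {l : List (Ordinal.{u} × G)}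
    (hmem : ∀ p ∈ l, p.1 < γord ∧ p.2 ∈ X p.1)
    (hlt : ∀ p ∈ l, p.1 < β) :
    (l.map Prod.snd).prod ∈ Gs β := by
  apply Subgroup.list_prod_mem
  intro x hx
  rw [List.mem_map] at hx
  obtain ⟨p, hp, rfl⟩ := hx
  have h1 : p.2 ∈ (Gs (p.1 + 1) : Set G) :=
    (hXsub p.1 (hmem p hp).1 (hmem p hp).2).1
  have h2 : p.1 + 1 ≤ β := by
    rw [Ordinal.add_one_eq_succ, Order.succ_le_iff]
    exact hlt p hp
  exact hmono' (p.1 + 1) β h2 hβ h1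

/-- head determines membership: the product of a valid nonempty list lies in
`Gs (α+1) \ Gs α` where `α` is the top index. -/
lemma aux_head_mem
    (hmono' : ∀ α β : Ordinal.{u}, α ≤ β → β < γord → Gs α ≤ Gs β)
    (hsucc : ∀ α : Ordinal.{u}, α < γord → α + 1 < γord)
    (hXsub : ∀ α : Ordinal.{u}, α < γord → X α ⊆ (Gs (α + 1) : Set G) \ (Gs α : Set G))
    {α : Ordinal.{u}} {x : G} {t : List (Ordinal.{u} × G)}
    (hchain : (((α, x) :: t).map Prod.fst).Chain' (· > ·))
    (hmem : ∀ p ∈ (α, x) :: t, p.1 < γord ∧ p.2 ∈ X p.1) :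
    (((α, x) :: t).map Prod.snd).prod ∈ (Gs (α + 1) : Set G) \ (Gs α : Set G) := by
  have hα : α < γord := (hmem (α, x) (List.mem_cons_self)).1
  have hxX : x ∈ X α := (hmem (α, x) (List.mem_cons_self)).2
  have htlt : ∀ p ∈ t, p.1 < α := by
    intro p hp
    have hpair : (((α, x) :: t).map Prod.fst).Pairwise (· > ·) := by
      rw [← List.isChain_iff_pairwise]
      exact hchain
    simp only [List.map_cons, List.pairwise_cons] at hpair
    exact hpair.1 p.1 (List.mem_map_of_mem (f := Prod.fst) hp)
  have hr : (t.map Prod.snd).prod ∈ Gs α :=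
    aux_prod_mem Gs γord X hmono' hXsub hα (fun p hp => hmem p (List.mem_cons_of_mem _ hp)) htlt
  have hxmem := hXsub α hα hxX
  rw [List.map_cons, List.prod_cons]
  constructor
  · exact mul_mem hxmem.1 (hmono' α (α + 1) (le_of_lt (lt_add_one α)) (hsucc α hα) hr)
  · intro hcon
    exact hxmem.2 (by
      have : x = (x * (t.map Prod.snd).prod) * ((t.map Prod.snd).prod)⁻¹ := by group
      rw [this]
      exact mul_mem hcon (inv_mem hr))

/-- uniqueness of valid representations. -/
lemma aux_unique
    (hmono' : ∀ α β : Ordinal.{u}, α ≤ β → β < γord → Gs α ≤ Gs β)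
    (hsucc : ∀ α : Ordinal.{u}, α < γord → α + 1 < γord)
    (hXsub : ∀ α : Ordinal.{u}, α < γord → X α ⊆ (Gs (α + 1) : Set G) \ (Gs α : Set G))
    (hXsep : ∀ α : Ordinal.{u}, α < γord → ∀ x ∈ X α, ∀ y ∈ X α, x * y⁻¹ ∈ Gs α → x = y)
    (l : List (Ordinal.{u} × G)) :
    ∀ l' : List (Ordinal.{u} × G),
    (l.map Prod.fst).Chain' (· > ·) → (∀ p ∈ l, p.1 < γord ∧ p.2 ∈ X p.1) →
    (l'.map Prod.fst).Chain' (· > ·) → (∀ p ∈ l', p.1 < γord ∧ p.2 ∈ X p.1) →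
    (l.map Prod.snd).prod = (l'.map Prod.snd).prod → l = l' := by
  induction l with
  | nil =>
    intro l' _ _ hc' hm' hprod
    cases l' with
    | nil => rfl
    | cons q t' =>
      exfalso
      obtain ⟨β, y⟩ := q
      have hh := aux_head_mem Gs γord X hmono' hsucc hXsub hc' hm'
      rw [← hprod] at hh
      exact hh.2 (by simpa using (Gs β).one_mem)
  | cons q t ih =>
    intro l' hc hm hc' hm' hprod
    obtain ⟨α, x⟩ := q
    cases l' with
    | nil =>
      exfalso
      have hh := aux_head_mem Gs γord X hmono' hsucc hXsub hc hm
      rw [hprod] at hh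
      exact hh.2 (by simpa using (Gs α).one_mem)
    | cons q' t' =>
      obtain ⟨β, y⟩ := q'
      have hα : α < γord := (hm (α, x) (List.mem_cons_self)).1
      have hβ : β < γord := (hm' (β, y) (List.mem_cons_self)).1
      have hh := aux_head_mem Gs γord X hmono' hsucc hXsub hc hm
      have hh' := aux_head_mem Gs γord X hmono' hsucc hXsub hc' hm'
      rw [hprod] at hh
      -- α = β
      have hab : α = β := by
        rcases lt_trichotomy α β with h | h | h
        · exfalso
          have h1 : α + 1 ≤ β := by
            rw [Ordinal.add_one_eq_succ, Order.succ_le_iff]; exact h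
          exact hh'.2 (hmono' (α + 1) β h1 hβ hh.1)
        · exact h
        · exfalso
          have : β + 1 ≤ α := by
            rw [Ordinal.add_one_eq_succ, Order.succ_le_iff]; exact h
          exact hh.2 (hmono' (β + 1) α this hα hh'.1)
      subst hab
      -- tails products in Gs α
      have hpairt : ∀ p ∈ t, p.1 < α := by
        intro p hp
        have hpair : (((α, x) :: t).map Prod.fst).Pairwise (· > ·) := by
          rw [← List.isChain_iff_pairwise]; exact hc
        simp only [List.map_cons, List.pairwise_cons] at hpair
        exact hpair.1 p.1 (List.mem_map_of_mem (f := Prod.fst) hp)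
      have hpairt' : ∀ p ∈ t', p.1 < α := by
        intro p hp
        have hpair : (((α, y) :: t').map Prod.fst).Pairwise (· > ·) := by
          rw [← List.isChain_iff_pairwise]; exact hc'
        simp only [List.map_cons, List.pairwise_cons] at hpair
        exact hpair.1 p.1 (List.mem_map_of_mem (f := Prod.fst) hp)
      have hr : (t.map Prod.snd).prod ∈ Gs α :=
        aux_prod_mem Gs γord X hmono' hXsub hα
          (fun p hp => hm p (List.mem_cons_of_mem _ hp)) hpairt
      have hr' : (t'.map Prod.snd).prod ∈ Gs α :=
        aux_prod_mem Gs γord X hmono' hXsub hα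
          (fun p hp => hm' p (List.mem_cons_of_mem _ hp)) hpairt'
      have hpeq : x * (t.map Prod.snd).prod = y * (t'.map Prod.snd).prod := by
        simpa [List.prod_cons] using hprod
      have hxy : x = y := by
        apply hXsep α hα x (hm (α, x) (List.mem_cons_self)).2
          y (hm' (α, y) (List.mem_cons_self)).2
        have h2 : x = y * (t'.map Prod.snd).prod * ((t.map Prod.snd).prod)⁻¹ := by
          rw [← hpeq]; group
        have h3 : y⁻¹ * x = (t'.map Prod.snd).prod * ((t.map Prod.snd).prod)⁻¹ := by
          rw [h2]; group
        rw [mul_comm x y⁻¹, h3]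
        exact mul_mem hr' (inv_mem hr)
      subst hxy
      have hteq : t = t' := by
        exact ih t' hc.tail
          (fun p hp => hm p (List.mem_cons_of_mem _ hp)) hc'.tail
          (fun p hp => hm' p (List.mem_cons_of_mem _ hp))
          (mul_left_cancel hpeq)
      rw [hteq]



lemma aux_X_countable (Gs : Ordinal.{u} → Subgroup G) (α : Ordinal.{u}) (Xa : Set G)
    (hq : #(↥(Gs (α + 1)) ⧸ ((Gs α).subgroupOf (Gs (α + 1)))) = ℵ₀)
    (hXsub : Xa ⊆ (Gs (α + 1) : Set G) \ (Gs α : Set G))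
    (hXsep : ∀ x ∈ Xa, ∀ y ∈ Xa, x * y⁻¹ ∈ Gs α → x = y) :
    Cardinal.mk Xa ≤ ℵ₀ := by
  have hinj : Function.Injective (fun x : Xa =>
      (QuotientGroup.mk ⟨x.1, (hXsub x.2).1⟩ :
        ↥(Gs (α + 1)) ⧸ ((Gs α).subgroupOf (Gs (α + 1))))) := by
    intro a b hab
    simp only [QuotientGroup.eq] at hab
    rw [Subgroup.mem_subgroupOf] at hab
    have h1 : (a.1)⁻¹ * b.1 ∈ Gs α := by simpa using hab
    have h2 : (b.1) * (a.1)⁻¹ ∈ Gs α := by rwa [mul_comm] at h1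
    exact Subtype.ext ((hXsep b.1 b.2 a.1 a.2 h2).symm)
  calc #Xa ≤ #(↥(Gs (α + 1)) ⧸ ((Gs α).subgroupOf (Gs (α + 1)))) := mk_le_of_injective hinj
    _ = ℵ₀ := hq


end AuxLemmas

/-- Given a chain of subgroups `(G_α)_{α<γ}` of an Abelian group `G` of cardinality
`γ > ℵ₀` (with `G_0` trivial, strictly increasing, continuous at limits, union `G`, and
`[G_{α+1} : G_α] = ℵ₀`), transversals `X_α` of the cosets of `G_α` in `G_{α+1} \ G_α`,
and an uncountable cardinal `κ ≤ γ`: for every `F ⊆ G` with `|F| < κ` there is a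
subgroup `Y` of `G` with `F ⊆ Y`, `|Y| < κ`, and such that `X_α ⊆ Y` whenever `g ∈ Y`
and `α ∈ supt g`, where `supt g` is the set of indices occurring in the unique
representation `g = x_s ⋯ x_1 x_0` (`x_i ∈ X_{α_i}`, `α_0 > ⋯ > α_s`), encoded as a list
`[(α_0, x_0), …, (α_s, x_s)]`. -/

theorem exists_small_saturated_subgroup (γ κ : Cardinal.{u})
    (hγ : ℵ₀ < γ) (hκ : ℵ₀ < κ) (hκγ : κ ≤ γ)
    (G : Type u) [CommGroup G] (hG : #G = γ)
    (Gs : Ordinal.{u} → Subgroup G)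
    (h0 : Gs 0 = ⊥)
    (hmono : ∀ α β : Ordinal.{u}, α < β → β < γ.ord → Gs α < Gs β)
    (hlim : ∀ β : Ordinal.{u}, β < γ.ord → Order.IsSuccLimit β →
      (Gs β : Set G) = ⋃ (α : Ordinal.{u}) (_ : α < β), (Gs α : Set G))
    (hunion : (⋃ (α : Ordinal.{u}) (_ : α < γ.ord), (Gs α : Set G)) = Set.univ)
    (hindex : ∀ α : Ordinal.{u}, α < γ.ord →
      #(↥(Gs (α + 1)) ⧸ ((Gs α).subgroupOf (Gs (α + 1)))) = ℵ₀)
    (X : Ordinal.{u} → Set G)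
    (hXsub : ∀ α : Ordinal.{u}, α < γ.ord →
      X α ⊆ (Gs (α + 1) : Set G) \ (Gs α : Set G))
    (hXcover : ∀ α : Ordinal.{u}, α < γ.ord →
      (Gs (α + 1) : Set G) \ (Gs α : Set G) = X α * (Gs α : Set G))
    (hXsep : ∀ α : Ordinal.{u}, α < γ.ord →
      ∀ x ∈ X α, ∀ y ∈ X α, x * y⁻¹ ∈ Gs α → x = y)
    (F : Set G) (hF : #F < κ) :
    ∃ Y : Subgroup G, F ⊆ (Y : Set G) ∧ #(Y : Set G) < κ ∧
      ∀ g ∈ Y, ∀ l : List (Ordinal.{u} × G),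
        (l.map Prod.fst).Chain' (· > ·) →
        (∀ p ∈ l, p.1 < γ.ord ∧ p.2 ∈ X p.1) →
        (l.map Prod.snd).prod = g →
        ∀ p ∈ l, X p.1 ⊆ (Y : Set G) := by
  have hsucc : ∀ α : Ordinal.{u}, α < γ.ord → α + 1 < γ.ord := by
    intro α h
    rw [Ordinal.add_one_eq_succ]
    exact (Cardinal.isSuccLimit_ord (le_of_lt hγ)).succ_lt h
  have hmono' : ∀ α β : Ordinal.{u}, α ≤ β → β < γ.ord → Gs α ≤ Gs β := by
    intro α β hle hβ
    rcases eq_or_lt_of_le hle with rfl | h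
    · exact le_refl _
    · exact (hmono α β h hβ).le
  have hXc : ∀ α : Ordinal.{u}, α < γ.ord → (X α).Countable := by
    intro α h
    rw [← Set.countable_coe_iff, ← Cardinal.mk_le_aleph0_iff]
    exact aux_X_countable Gs α (X α) (hindex α h) (hXsub α h) (hXsep α h)
  -- the set of transversal elements appearing in the representation of g
  set T : G → Set G := fun g => {x | ∃ l : List (Ordinal.{u} × G),
    (l.map Prod.fst).Chain' (· > ·) ∧ (∀ p ∈ l, p.1 < γ.ord ∧ p.2 ∈ X p.1) ∧
    (l.map Prod.snd).prod = g ∧ ∃ p ∈ l, x ∈ X p.1} with hTdef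
  have hT : ∀ g : G, #(T g) ≤ ℵ₀ := by
    intro g
    by_cases hex : ∃ l : List (Ordinal.{u} × G),
        (l.map Prod.fst).Chain' (· > ·) ∧ (∀ p ∈ l, p.1 < γ.ord ∧ p.2 ∈ X p.1) ∧
        (l.map Prod.snd).prod = g
    · obtain ⟨l₀, h₀c, h₀m, h₀p⟩ := hex
      have hsub : T g ⊆ ⋃ p ∈ {p | p ∈ l₀}, X p.1 := by
        rintro x ⟨l, hc, hm, hp, p, hpl, hx⟩
        have : l = l₀ := aux_unique Gs γ.ord X hmono' hsucc hXsub hXsep l l₀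
          hc hm h₀c h₀m (hp.trans h₀p.symm)
        subst this
        exact Set.mem_biUnion hpl hx
      have hcnt : (⋃ p ∈ {p | p ∈ l₀}, X p.1).Countable :=
        Set.Countable.biUnion (l₀.finite_toSet.countable)
          (fun p hp => hXc p.1 (h₀m p hp).1)
      have hTc : (T g).Countable := hcnt.mono hsub
      exact Cardinal.mk_le_aleph0_iff.mpr (Set.countable_coe_iff.mpr hTc)
    · have : T g = ∅ := by
        rw [Set.eq_empty_iff_forall_notMem]
        rintro x ⟨l, hc, hm, hp, _⟩
        exact hex ⟨l, hc, hm, hp⟩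
      rw [this]
      simp
  -- the one-step saturation
  set step : Set G → Set G := fun s =>
    (Subgroup.closure s : Set G) ∪ ⋃ (g : (Subgroup.closure s : Set G)), T g.1 with hstepdef
  set S : ℕ → Set G := fun n => Nat.rec F (fun _ s => step s) n with hSdef
  have hS0 : S 0 = F := rfl
  have hSsucc : ∀ n, S (n + 1) = step (S n) := fun n => rfl
  -- cardinality bound
  set c : Cardinal.{u} := #F + ℵ₀ with hcdef
  have hc_inf : ℵ₀ ≤ c := le_add_self
  have hcκ : c < κ := Cardinal.add_lt_of_lt (le_of_lt hκ) hF hκ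
  have hcard : ∀ n, #(S n) ≤ c := by
    intro n
    induction n with
    | zero => exact le_trans (le_of_eq rfl) (self_le_add_right _ _)
    | succ n ihn =>
      rw [hSsucc n]
      have hcl : #(Subgroup.closure (S n) : Set G) ≤ c := aux_closure_card_le _ hc_inf ihn
      have hun : #(⋃ (g : (Subgroup.closure (S n) : Set G)), T g.1) ≤ c := by
        calc #(⋃ (g : (Subgroup.closure (S n) : Set G)), T g.1)
            ≤ #(Subgroup.closure (S n) : Set G) * ⨆ (g : (Subgroup.closure (S n) : Set G)), #(T g.1) :=
              Cardinal.mk_iUnion_le _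
          _ ≤ c * ℵ₀ := mul_le_mul' hcl (ciSup_le' fun (g : (Subgroup.closure (S n) : Set G)) => hT g.1)
          _ ≤ c * c := mul_le_mul' (le_refl c) hc_inf
          _ = c := Cardinal.mul_eq_self hc_inf
      calc #(step (S n) : Set G) ≤ #(Subgroup.closure (S n) : Set G)
            + #(⋃ (g : (Subgroup.closure (S n) : Set G)), T g.1) := Cardinal.mk_union_le _ _
        _ ≤ c + c := add_le_add hcl hun
        _ = c := Cardinal.add_eq_self hc_inf
  -- the subgroup chain and its union
  set Ysub : ℕ → Subgroup G := fun n => Subgroup.closure (S n) with hYsubdef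
  have hYmono : Monotone Ysub := by
    apply monotone_nat_of_le_succ
    intro n x hx
    apply Subgroup.subset_closure
    rw [hSsucc n]
    exact Set.mem_union_left _ hx
  have hdir : Directed (· ≤ ·) Ysub := hYmono.directed_le
  refine ⟨⨆ n, Ysub n, ?_, ?_, ?_⟩
  · intro x hx
    exact SetLike.le_def.mp (le_iSup Ysub 0) (Subgroup.subset_closure hx)
  · have hco : ((⨆ n, Ysub n : Subgroup G) : Set G) = ⋃ n, (Ysub n : Set G) :=
      Subgroup.coe_iSup_of_directed hdir
    rw [hco]
    have heq : (⋃ n, (Ysub n : Set G)) = ⋃ (n : ULift.{u} ℕ), (Ysub n.down : Set G) := by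
      apply Set.ext
      intro x
      simp only [Set.mem_iUnion]
      exact ⟨fun ⟨n, h⟩ => ⟨⟨n⟩, h⟩, fun ⟨n, h⟩ => ⟨n.down, h⟩⟩
    rw [heq]
    calc #(⋃ (n : ULift.{u} ℕ), (Ysub n.down : Set G))
        ≤ #(ULift.{u} ℕ) * ⨆ (n : ULift.{u} ℕ), #(Ysub n.down : Set G) := Cardinal.mk_iUnion_le _
      _ ≤ ℵ₀ * c := by
          apply mul_le_mul'
          · simp
          · exact ciSup_le' fun (n : ULift.{u} ℕ) => aux_closure_card_le _ hc_inf (hcard n.down)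
      _ ≤ c * c := mul_le_mul' hc_inf (le_refl c)
      _ = c := Cardinal.mul_eq_self hc_inf
      _ < κ := hcκ
  · intro g hg l hc hm hprod p hp x hx
    obtain ⟨n, hn⟩ := (Subgroup.mem_iSup_of_directed hdir).mp hg
    have hxT : x ∈ T g := ⟨l, hc, hm, hprod, p, hp, hx⟩
    have hxS : x ∈ S (n + 1) := by
      rw [hSsucc n]
      exact Set.mem_union_right _ (Set.mem_iUnion.mpr ⟨⟨g, hn⟩, hxT⟩)
    exact SetLike.le_def.mp (le_iSup Ysub (n + 1)) (Subgroup.subset_closure hxS)
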